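/- Let m ≥ 1 and let T be a tree on the vertex set {1, …, m} (a connected acyclic simple graph). For each edge e of T, fix an orientation e = (u_e, v_e) and a kernel K_e : ℤ → ℝ with Σ_{z∈ℤ} |K_e(z)| < ∞. Then for every N ≥ 1, Σ_{x₁, …, x_m ∈ {0, …, N−1}} ∏_{e ∈ E(T)} |K_e(x_{u_e} − x_{v_e})| ≤ N · ∏_{e ∈ E(T)} ‖K_e‖_{ℓ¹(ℤ)}. -/

import Mathlib

lemma aux_pi (n : ℕ) (f : Fin n → ℤ → ℝ) (hf : ∀ i, Summable (f i))
    (hnn : ∀ i z, 0 ≤ f i z) :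
    Summable (fun d : Fin n → ℤ => ∏ i, f i (d i)) ∧
    ∑' d : Fin n → ℤ, ∏ i, f i (d i) = ∏ i, ∑' z, f i z := by
  induction n with
  | zero =>
      refine ⟨Summable.of_finite, ?_⟩
      simp only [Finset.univ_eq_empty, Finset.prod_empty]
      rw [tsum_eq_single (default : Fin 0 → ℤ) (fun b hb => absurd (Subsingleton.elim b default) hb)]
  | succ n ih =>
      obtain ⟨hs, ht⟩ := ih (fun i => f i.succ) (fun i => hf i.succ) (fun i z => hnn i.succ z)
      have hnorm0 : Summable fun z => ‖f 0 z‖ := by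
        refine (hf 0).congr fun z => ?_
        rw [Real.norm_eq_abs, abs_of_nonneg (hnn 0 z)]
      have hnormP : Summable fun d : Fin n → ℤ => ‖∏ i, f i.succ (d i)‖ := by
        refine hs.congr fun d => ?_
        rw [Real.norm_eq_abs, abs_of_nonneg (Finset.prod_nonneg fun i _ => hnn i.succ (d i))]
      have hsum2 : Summable fun p : ℤ × (Fin n → ℤ) => f 0 p.1 * ∏ i, f i.succ (p.2 i) :=
        (hnorm0.mul_norm hnormP).of_norm
      have key : ∀ d : Fin (n+1) → ℤ, ∏ i, f i (d i) =
          f 0 ((Fin.consEquiv (fun _ : Fin (n+1) => ℤ)).symm d).1 * ∏ i, f i.succ (((Fin.consEquiv (fun _ : Fin (n+1) => ℤ)).symm d).2 i) := by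
        intro d
        rw [Fin.prod_univ_succ]
        rfl
      constructor
      · refine ((Fin.consEquiv (fun _ : Fin (n+1) => ℤ)).symm.summable_iff.2 hsum2).congr fun d => (key d).symm
      · calc ∑' d : Fin (n+1) → ℤ, ∏ i, f i (d i)
            = ∑' p : ℤ × (Fin n → ℤ), f 0 p.1 * ∏ i, f i.succ (p.2 i) := by
              rw [← (Fin.consEquiv (fun _ : Fin (n+1) => ℤ)).symm.tsum_eq]
              exact tsum_congr key
          _ = (∑' z, f 0 z) * ∑' d : Fin n → ℤ, ∏ i, f i.succ (d i) :=
              (tsum_mul_tsum_of_summable_norm hnorm0 hnormP).symm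
          _ = ∏ i, ∑' z, f i z := by rw [ht, Fin.prod_univ_succ]

lemma aux_inj (m : ℕ) (ε : Fin (m - 1) → Fin m × Fin m)
    (htree : (SimpleGraph.fromEdgeSet (Set.range fun i => s((ε i).1, (ε i).2))).IsTree)
    (x y : Fin m → ℤ) (r : Fin m) (hr : x r = y r)
    (hd : ∀ i, x (ε i).1 - x (ε i).2 = y (ε i).1 - y (ε i).2) : x = y := by
  set G := SimpleGraph.fromEdgeSet (Set.range fun i => s((ε i).1, (ε i).2)) with hG
  have hadj : ∀ a b : Fin m, G.Adj a b → x a - y a = x b - y b := by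
    intro a b hab
    rw [hG, SimpleGraph.fromEdgeSet_adj] at hab
    obtain ⟨⟨i, hi⟩, -⟩ := hab
    rw [Sym2.eq_iff] at hi
    rcases hi with ⟨h1, h2⟩ | ⟨h1, h2⟩ <;> have := hd i <;> rw [h1, h2] at this <;> linarith
  funext v
  have hreach := htree.isConnected.preconnected r v
  obtain ⟨w⟩ := hreach
  have : ∀ {a b : Fin m} (_ : G.Walk a b), x a - y a = x b - y b := by
    intro a b w
    induction w with
    | nil => rfl
    | cons h p ih => rw [hadj _ _ h]; exact ih
  have := this w
  rw [hr] at this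
  linarith

/-- Tree convolution bound, Lemma `tree_convolution`.
Let `T` be a tree on `m` vertices, presented by its `m − 1` oriented edges
`ε i = (u_i, v_i)` (pairwise distinct, no loops, generating a tree), each carrying a kernel
`K_i ∈ ℓ¹(ℤ)`.  Then
`Σ_{x : {1..m} → {0..N−1}} ∏_i |K_i(x_{u_i} − x_{v_i})| ≤ N ∏_i ‖K_i‖_{ℓ¹}`. -/
theorem stmt8 (m : ℕ) (hm : 1 ≤ m)
    (ε : Fin (m - 1) → Fin m × Fin m)
    (hne : ∀ i, (ε i).1 ≠ (ε i).2)
    (hinj : Function.Injective fun i => s((ε i).1, (ε i).2))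
    (htree : (SimpleGraph.fromEdgeSet (Set.range fun i => s((ε i).1, (ε i).2))).IsTree)
    (K : Fin (m - 1) → ℤ → ℝ)
    (hK : ∀ i, Summable fun z : ℤ => |K i z|)
    (N : ℕ) (hN : 1 ≤ N) :
    ∑ x ∈ Fintype.piFinset (fun _ : Fin m => Finset.range N),
        ∏ i : Fin (m - 1), |K i ((x (ε i).1 : ℤ) - (x (ε i).2 : ℤ))| ≤
      (N : ℝ) * ∏ i : Fin (m - 1), ∑' z : ℤ, |K i z| := by
  classical
  obtain ⟨hFs, hFt⟩ := aux_pi (m - 1) (fun i z => |K i z|) hK (fun i z => abs_nonneg _)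
  set F : (Fin (m - 1) → ℤ) → ℝ := fun d => ∏ i, |K i (d i)| with hF
  set ψ : (Fin m → ℕ) → (Fin (m - 1) → ℤ) :=
    fun x i => (x (ε i).1 : ℤ) - (x (ε i).2 : ℤ) with hψ
  set S := Fintype.piFinset (fun _ : Fin m => Finset.range N) with hS
  set root : Fin m := ⟨0, hm⟩ with hroot
  have hmaps : ∀ x ∈ S, x root ∈ Finset.range N := by
    intro x hx
    exact (Fintype.mem_piFinset.1 hx) root
  have hsplit : ∑ x ∈ S, F (ψ x) =
      ∑ r ∈ Finset.range N, ∑ x ∈ S.filter (fun x => x root = r), F (ψ x) :=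
    (Finset.sum_fiberwise_of_maps_to hmaps _).symm
  have hfiber : ∀ r ∈ Finset.range N,
      ∑ x ∈ S.filter (fun x => x root = r), F (ψ x) ≤ ∑' d, F d := by
    intro r _
    have hinjψ : ∀ x ∈ S.filter (fun x => x root = r),
        ∀ y ∈ S.filter (fun x => x root = r), ψ x = ψ y → x = y := by
      intro x hx y hy hxy
      rw [Finset.mem_filter] at hx hy
      have hx' : ((↑) ∘ x : Fin m → ℤ) = ((↑) ∘ y) := by
        refine aux_inj m ε htree _ _ root ?_ ?_
        · simp [Function.comp, hx.2, hy.2]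
        · intro i
          have := congrFun hxy i
          simpa [hψ] using this
      funext v
      exact Nat.cast_injective (congrFun hx' v)
    calc ∑ x ∈ S.filter (fun x => x root = r), F (ψ x)
        = ∑ d ∈ (S.filter (fun x => x root = r)).image ψ, F d :=
          (Finset.sum_image hinjψ).symm
      _ ≤ ∑' d, F d :=
          Summable.sum_le_tsum _ (fun d _ => Finset.prod_nonneg fun i _ => abs_nonneg _) hFs
  calc ∑ x ∈ S, ∏ i : Fin (m - 1), |K i ((x (ε i).1 : ℤ) - (x (ε i).2 : ℤ))|
      = ∑ x ∈ S, F (ψ x) := rfl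
    _ = ∑ r ∈ Finset.range N, ∑ x ∈ S.filter (fun x => x root = r), F (ψ x) := hsplit
    _ ≤ ∑ r ∈ Finset.range N, ∑' d, F d := Finset.sum_le_sum hfiber
    _ = (N : ℝ) * ∑' d, F d := by
        rw [Finset.sum_const, Finset.card_range, nsmul_eq_mul]
    _ = (N : ℝ) * ∏ i : Fin (m - 1), ∑' z : ℤ, |K i z| := by rw [hFt]
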